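/- Let $\mathcal{X}=(\boldsymbol{x}_n)_{n=1}^\infty$ be a basis of a $p$-Banach space $\mathbb{X}$, $0<p\le 1$, with biorthogonal functionals $(\boldsymbol{x}_n^*)$. Suppose $\mathcal{X}$ is truncation quasi-greedy with constant $C$, i.e., $\min_{n\in A}|\boldsymbol{x}_n^*(f)| \, \|\sum_{n\in A}\operatorname{sgn}(\boldsymbol{x}_n^*(f))\boldsymbol{x}_n\| \le C\|f\|$ for all $f$ and all greedy sets $A$ of $f$. Then for every finite set $A \subset \mathbb{N}$, every choice of unimodular signs $\varepsilon \in \mathbb{E}^A$, and every $f \in \mathbb{X}$ with $\|f\|_\infty \le 1$ and $A \cap \operatorname{supp}(f) = \emptyset$, we have $\|\mathbb{1}_{\varepsilon,A}\| \le 2^{1/p} C \, \|\mathbb{1}_{\varepsilon,A} + f\|$. -/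

import Mathlib

/-- The sign of a complex scalar, with the convention `sgn 0 = 1`. -/
noncomputable def csgn (z : ℂ) : ℂ := if z = 0 then 1 else z / ((‖z‖ : ℝ) : ℂ)

lemma csgn_of_abs_one {z : ℂ} (hz : ‖z‖ = 1) : csgn z = z := by
  have hz0 : z ≠ 0 := by
    intro h; simp [h] at hz
  simp [csgn, hz0, hz]

theorem stmt7 {X : Type*} [AddCommGroup X] [Module ℂ X] (p : ℝ) (hp : 0 < p) (hp1 : p ≤ 1)
    (N : X → ℝ) (hN0 : ∀ f, 0 ≤ N f)
    (hNp : ∀ f g, N (f + g) ^ p ≤ N f ^ p + N g ^ p)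
    (hNh : ∀ (a : ℂ) (f : X), N (a • f) = ‖a‖ * N f)
    (e : ℕ → X) (φ : ℕ → X →ₗ[ℂ] ℂ)
    (hbi : ∀ n k, φ n (e k) = if n = k then 1 else 0)
    (C : ℝ)
    (hTQG : ∀ (g : X) (A : Finset ℕ) (hA : A.Nonempty),
      (∀ n ∈ A, ∀ k ∉ A, ‖φ k g‖ ≤ ‖φ n g‖) →
      (A.inf' hA fun n => ‖φ n g‖) * N (∑ n ∈ A, csgn (φ n g) • e n)
        ≤ C * N g)
    (A : Finset ℕ) (ε : ℕ → ℂ) (hε : ∀ n ∈ A, ‖ε n‖ = 1)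
    (f : X) (hfinf : ∀ n, ‖φ n f‖ ≤ 1) (hsupp : ∀ n ∈ A, φ n f = 0) :
    N (∑ n ∈ A, ε n • e n) ≤
      2 ^ (1/p) * C * N ((∑ n ∈ A, ε n • e n) + f) := by
  have hN00 : N 0 = 0 := by
    have := hNh 0 0
    simpa using this
  have h2p : (1:ℝ) ≤ 2 ^ (1/p) := by
    apply Real.one_le_rpow one_le_two
    positivity
  -- coefficients of the sum
  have hφS : ∀ n, φ n (∑ k ∈ A, ε k • e k) = if n ∈ A then ε n else 0 := by
    intro n
    rw [map_sum]
    simp only [map_smul, hbi, smul_eq_mul, mul_ite, mul_one, mul_zero]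
    by_cases hn : n ∈ A
    · rw [Finset.sum_eq_single n]
      · simp [hn]
      · intro b hb hbn; simp [Ne.symm hbn]
      · intro h; exact absurd hn h
    · rw [Finset.sum_eq_zero, if_neg hn]
      intro b hb
      have : n ≠ b := by rintro rfl; exact hn hb
      simp [this]
  set g := (∑ n ∈ A, ε n • e n) + f with hg
  have hφgA : ∀ n ∈ A, φ n g = ε n := by
    intro n hn
    simp [hg, map_add, hφS n, hn, hsupp n hn]
  have hφgB : ∀ k ∉ A, φ k g = φ k f := by
    intro k hk
    simp [hg, map_add, hφS k, hk]
  rcases A.eq_empty_or_nonempty with rfl | hA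
  · -- empty case: need 0 ≤ 2^(1/p) * C * N f
    have hgf : g = f := by simp [hg]
    simp only [Finset.sum_empty, hN00, zero_add]
    rcases le_or_gt 0 C with hC | hC
    · have := hN0 g
      positivity
    · -- C < 0 : show N f = 0
      have he0 : N (e 0) = 0 := by
        have h := hTQG (e 0) {0} ⟨0, by simp⟩ ?_
        · have hb : φ 0 (e 0) = 1 := by simp [hbi]
          simp only [Finset.inf'_singleton, Finset.sum_singleton, hb] at h
          rw [csgn_of_abs_one (by simp)] at h
          simp only [map_one, norm_one, one_mul, one_smul] at h
          nlinarith [hN0 (e 0)]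
        · intro n hn k hk
          simp only [Finset.mem_singleton] at hn hk
          subst hn
          simp [hbi, hk]
      set g' := f + (2:ℂ) • e 0 with hg'
      have hφ0 : (1:ℝ) ≤ ‖φ 0 g'‖ := by
        have hrw : φ 0 g' = φ 0 f + 2 := by simp [hg', hbi]
        rw [hrw]
        have h1 := hfinf 0
        have h2 := norm_add_le (φ 0 f + 2) (-φ 0 f)
        simp only [add_neg_cancel_comm] at h2
        have h3 : ‖(-(φ 0 f))‖ = ‖φ 0 f‖ :=
          norm_neg (φ 0 f)
        have h4 : ‖(2:ℂ)‖ = 2 := by simp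
        linarith
      have h := hTQG g' {0} ⟨0, by simp⟩ ?_
      · simp only [Finset.inf'_singleton, Finset.sum_singleton] at h
        rw [hNh, he0, mul_zero, mul_zero] at h
        have hNg' : N g' = 0 := by nlinarith [hN0 g']
        have hf : f = g' + (-(2:ℂ)) • e 0 := by
          rw [hg', add_assoc, ← add_smul]
          norm_num
        have hp2 := hNp g' ((-(2:ℂ)) • e 0)
        rw [← hf, hNg', hNh, he0, mul_zero] at hp2
        have hfp : N f ^ p ≤ 0 := by
          simpa [Real.zero_rpow hp.ne'] using hp2
        have hNf : N f = 0 := by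
          by_contra hne
          have hpos : 0 < N f := lt_of_le_of_ne (hN0 f) (Ne.symm hne)
          have := Real.rpow_pos_of_pos hpos p
          linarith
        rw [hgf, hNf, mul_zero]
      · intro n hn k hk
        simp only [Finset.mem_singleton] at hn hk
        subst hn
        have hrw : φ k g' = φ k f := by simp [hg', hbi, hk]
        rw [hrw]
        exact (hfinf k).trans hφ0
  · -- nonempty case
    have hgreedy : ∀ n ∈ A, ∀ k ∉ A, ‖φ k g‖ ≤ ‖φ n g‖ := by
      intro n hn k hk
      rw [hφgA n hn, hφgB k hk, hε n hn]
      exact hfinf k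
    have h := hTQG g A hA hgreedy
    have hinf : (A.inf' hA fun n => ‖φ n g‖) = 1 := by
      apply le_antisymm
      · obtain ⟨n, hn⟩ := hA
        exact (Finset.inf'_le _ hn).trans_eq (by rw [hφgA n hn, hε n hn])
      · rw [Finset.le_inf'_iff]
        intro n hn
        rw [hφgA n hn, hε n hn]
    have hsum : (∑ n ∈ A, csgn (φ n g) • e n) = ∑ n ∈ A, ε n • e n := by
      apply Finset.sum_congr rfl
      intro n hn
      rw [hφgA n hn, csgn_of_abs_one (hε n hn)]
    rw [hinf, hsum, one_mul] at h
    have hCg : 0 ≤ C * N g := (hN0 _).trans h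
    have h3 : C * N g ≤ 2 ^ (1/p) * C * N g := by nlinarith
    exact h.trans h3
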